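/- Ring-doubling impossibility argument (weak fairness): Let A be any deterministic population protocol over states Q with colors f : Q → {red, blue}. Let Ξ = C₀, C₁, ... be an execution of A on the 3-ring R₁ with agents v₀, v₁, v₂ (edges (v₀,v₁), (v₁,v₂), (v₂,v₀)), starting from all agents in the same initial state. Construct the 6-ring R₂ with agents v'₀,...,v'₅ and edges (v'₀,v'₁), (v'₁,v'₅), (v'₅,v'₃), (v'₃,v'₄), (v'₄,v'₂), (v'₂,v'₀), and define the execution Ξ' = D₀, D'₀, D₁, D'₁, ... that simulates each interaction of Ξ twice as specified (interactions involving v₀ are simulated at indices i and i+3; the interaction (v₁,v₂) is simulated as (v'₁,v'₅) then (v'₄,v'₂)). Then for every r ≥ 0 and every i ∈ {0,1,2}, s(v_i, C_r) = s(v'_i, D_r) = s(v'_{i+3}, D_r). Consequently, if every C_r with r ≥ t satisfies #red = 1 and #blue = 2 on R₁, then every D_r with r ≥ t satisfies #red = 2 and #blue = 4 on R₂. -/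
import Mathlib


/-- Colors. -/
inductive Color2 : Type
  | red | blue
deriving DecidableEq

/-- Apply the transition function `δ` to the ordered pair of agents `p`. -/
def apply2 {Q V : Type} [DecidableEq V] (δ : Q → Q → Q × Q) (p : V × V)
    (C : V → Q) : V → Q :=
  Function.update (Function.update C p.1 (δ (C p.1) (C p.2)).1) p.2
    (δ (C p.1) (C p.2)).2

/-- Number of agents with color `c`. -/
def cntCol {Q V : Type} [Fintype V] (f : Q → Color2) (C : V → Q) (c : Color2) : ℕ :=
  (Finset.univ.filter fun a => f (C a) = c).card

/-- The ring `R₁` on three agents (edges (v₀,v₁), (v₁,v₂), (v₂,v₀)). -/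
def AdjR1 (x y : Fin 3) : Prop := x ≠ y

/-- The ring `R₂` on six agents with edges
(v'₀,v'₁), (v'₁,v'₅), (v'₅,v'₃), (v'₃,v'₄), (v'₄,v'₂), (v'₂,v'₀). -/
def AdjR2 (x y : Fin 6) : Prop :=
  (x, y) ∈ [((0 : Fin 6), (1 : Fin 6)), (1, 0), (1, 5), (5, 1), (5, 3), (3, 5),
    (3, 4), (4, 3), (4, 2), (2, 4), (2, 0), (0, 2)]

/-- The copy `v'_i` of `v_i` in the first half of `R₂`. -/
def emb1 (i : Fin 3) : Fin 6 := ⟨i.1, by omega⟩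

/-- The copy `v'_{i+3}` of `v_i` in the second half of `R₂`. -/
def emb2 (i : Fin 3) : Fin 6 := ⟨i.1 + 3, by omega⟩

def pi36 (x : Fin 6) : Fin 3 := ⟨x.1 % 3, Nat.mod_lt _ (by norm_num)⟩

def simPairs (p : Fin 3 × Fin 3) : (Fin 6 × Fin 6) × (Fin 6 × Fin 6) :=
  if p = (1, 2) then ((1, 5), (4, 2))
  else if p = (2, 1) then ((2, 4), (5, 1))
  else ((⟨p.1.1, by omega⟩, ⟨p.2.1, by omega⟩),
        (⟨p.1.1 + 3, by omega⟩, ⟨p.2.1 + 3, by omega⟩))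

instance (x y : Fin 6) : Decidable (AdjR2 x y) := by unfold AdjR2; infer_instance

lemma sim_step {Q : Type} (δ : Q → Q → Q × Q) (p : Fin 3 × Fin 3) (hp : p.1 ≠ p.2)
    (C : Fin 3 → Q) :
    AdjR2 (simPairs p).1.1 (simPairs p).1.2 ∧ AdjR2 (simPairs p).2.1 (simPairs p).2.2 ∧
      apply2 δ (simPairs p).2 (apply2 δ (simPairs p).1 (C ∘ pi36)) = (apply2 δ p C) ∘ pi36 := by
  obtain ⟨x, y⟩ := p
  fin_cases x <;> fin_cases y <;>
    first
    | exact absurd rfl hp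
    | (refine ⟨by decide, by decide, ?_⟩
       funext z
       fin_cases z <;>
         simp [simPairs, apply2, Function.update, pi36, Fin.ext_iff,
           show ((0 : Fin 6) : ℕ) = 0 from rfl, show ((1 : Fin 6) : ℕ) = 1 from rfl,
           show ((2 : Fin 6) : ℕ) = 2 from rfl, show ((3 : Fin 6) : ℕ) = 3 from rfl,
           show ((4 : Fin 6) : ℕ) = 4 from rfl, show ((5 : Fin 6) : ℕ) = 5 from rfl,
           show (⟨0, by omega⟩ : Fin 3) = 0 from rfl,
           show (⟨1, by omega⟩ : Fin 3) = 1 from rfl,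
           show (⟨2, by omega⟩ : Fin 3) = 2 from rfl])

lemma cnt_double {Q : Type} (f : Q → Color2) (C : Fin 3 → Q) (c : Color2) :
    cntCol f (C ∘ pi36) c = 2 * cntCol f C c := by
  simp only [cntCol, Finset.card_filter, Fin.sum_univ_six, Fin.sum_univ_three,
    Function.comp, show pi36 0 = 0 from rfl, show pi36 1 = 1 from rfl,
    show pi36 2 = 2 from rfl, show pi36 3 = 0 from rfl, show pi36 4 = 1 from rfl,
    show pi36 5 = 2 from rfl]
  ring

theorem stmt19 (Q : Type) (δ : Q → Q → Q × Q) (f : Q → Color2) (q0 : Q)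
    (Ξ : ℕ → Fin 3 → Q) (pairs : ℕ → Fin 3 × Fin 3)
    (hinit : Ξ 0 = fun _ => q0)
    (hedges : ∀ i, AdjR1 (pairs i).1 (pairs i).2)
    (hexec : ∀ i, Ξ (i + 1) = apply2 δ (pairs i) (Ξ i))
    (t : ℕ) :
    ∃ D D' : ℕ → Fin 6 → Q,
      (D 0 = fun _ => q0) ∧
      (∀ r, ∃ p : Fin 6 × Fin 6, AdjR2 p.1 p.2 ∧ D' r = apply2 δ p (D r)) ∧
      (∀ r, ∃ p : Fin 6 × Fin 6, AdjR2 p.1 p.2 ∧ D (r + 1) = apply2 δ p (D' r)) ∧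
      (∀ r (i : Fin 3), D r (emb1 i) = Ξ r i ∧ D r (emb2 i) = Ξ r i) ∧
      ((∀ r, t ≤ r → cntCol f (Ξ r) .red = 1 ∧ cntCol f (Ξ r) .blue = 2) →
        ∀ r, t ≤ r → cntCol f (D r) .red = 2 ∧ cntCol f (D r) .blue = 4) := by
  refine ⟨fun r => Ξ r ∘ pi36, fun r => apply2 δ (simPairs (pairs r)).1 (Ξ r ∘ pi36),
    ?_, ?_, ?_, ?_, ?_⟩
  · funext z; simp [hinit]
  · intro r
    exact ⟨(simPairs (pairs r)).1, (sim_step δ (pairs r) (hedges r) (Ξ r)).1, rfl⟩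
  · intro r
    refine ⟨(simPairs (pairs r)).2, (sim_step δ (pairs r) (hedges r) (Ξ r)).2.1, ?_⟩
    show Ξ (r + 1) ∘ pi36 =
      apply2 δ (simPairs (pairs r)).2 (apply2 δ (simPairs (pairs r)).1 (Ξ r ∘ pi36))
    rw [hexec r, ← (sim_step δ (pairs r) (hedges r) (Ξ r)).2.2]
  · intro r i
    constructor <;> (show Ξ r (pi36 _) = Ξ r i; congr 1) <;>
      simp [pi36, emb1, emb2, Fin.ext_iff, Nat.mod_eq_of_lt i.2]
  · intro h r hr
    have := h r hr
    constructor <;> rw [cnt_double] <;> omega
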